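/- If ρ = (τ_1,...,τ_m) is a factorization in S_n and Δ_m is the Garside element of the braid group B_m, then the Hurwitz action of Δ_m satisfies ρ·Δ_m = (τ_m^{τ_{m-1}···τ_1}, ..., τ_2^{τ_1}, τ_1); equivalently, ρ* equals the reverse of ρ·Δ_m. -/

import Mathlib

open Equiv

/-- The braid relations on `k` generators `σ_1, ..., σ_k` (indexed by `Fin k`, with
generator `i` standing for `σ_{i+1}`): commutation relations for distant generators and
the braid relations for adjacent ones. -/
def braidRels (k : ℕ) : Set (FreeGroup (Fin k)) :=
  {r | (∃ i j : Fin k, (i : ℕ) + 1 < (j : ℕ) ∧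
          r = FreeGroup.of i * FreeGroup.of j * (FreeGroup.of i)⁻¹ * (FreeGroup.of j)⁻¹) ∨
       (∃ i j : Fin k, (i : ℕ) + 1 = (j : ℕ) ∧
          r = FreeGroup.of i * FreeGroup.of j * FreeGroup.of i *
              (FreeGroup.of j * FreeGroup.of i * FreeGroup.of j)⁻¹)}

/-- The braid group on `m` strands, presented with `m - 1` generators. -/
abbrev BraidGroup (m : ℕ) := PresentedGroup (braidRels (m - 1))

/-- The standard generator `σ_{i+1}` of the braid group `B_m` (0-indexed `i : Fin (m-1)`). -/
def braidGen {m : ℕ} (i : Fin (m - 1)) : BraidGroup m := PresentedGroup.of i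

/-- The generator `σ_{k+1}` of `B_m` as a total function of `k : ℕ` (equal to `1` out of range). -/
def braidGen' (m k : ℕ) : BraidGroup m :=
  if h : k < m - 1 then PresentedGroup.of ⟨k, h⟩ else 1

/-- `δ_{i,j} = σ_{j-1} σ_{j-2} ⋯ σ_i` (1-based indices). -/
def braidDelta (m i j : ℕ) : BraidGroup m :=
  ((List.range (j - i)).map fun t => braidGen' m (j - 2 - t)).prod

/-- `Δ_{i,j} = δ_{i,j} δ_{i+1,j} ⋯ δ_{j-1,j}` (1-based indices). -/
def braidDeltaGar (m i j : ℕ) : BraidGroup m :=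
  ((List.range (j - i)).map fun t => braidDelta m (i + t) j).prod

/-- The Garside element `Δ_m = Δ_{1,m}` of `B_m`. -/
def garside (m : ℕ) : BraidGroup m := braidDeltaGar m 1 m

/-- `λ_{i,j} = σ_i σ_{i+1} ⋯ σ_{j-1}` (1-based indices). -/
def braidLambda (m i j : ℕ) : BraidGroup m :=
  ((List.range (j - i)).map fun t => braidGen' m (i - 1 + t)).prod

/-- The Hurwitz move of the generator `σ_{i+1}` on a sequence of `m` permutations:
it replaces the pair `(τ_i, τ_{i+1})` by `(τ_i τ_{i+1} τ_i⁻¹, τ_i)`. -/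
def hurwitzMove {n m : ℕ} (i : Fin (m - 1)) (ρ : Fin m → Perm (Fin n)) :
    Fin m → Perm (Fin n) := fun j =>
  if (j : ℕ) = (i : ℕ) then
    ρ j * ρ ⟨(i : ℕ) + 1, by have := i.isLt; omega⟩ * (ρ j)⁻¹
  else if (j : ℕ) = (i : ℕ) + 1 then ρ ⟨(i : ℕ), by have := i.isLt; omega⟩
  else ρ j

/-- The mind-body dual of a factorization `ρ = (τ_1, ..., τ_m)` (indexed by `Fin m`):
its `i`-th entry is `τ_i^{τ_{i-1} ⋯ τ_1}`. -/
def mbDualF {n m : ℕ} (ρ : Fin m → Perm (Fin n)) : Fin m → Perm (Fin n) :=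
  fun i => (((List.ofFn ρ).take (i : ℕ)).reverse.prod)⁻¹ * ρ i *
    ((List.ofFn ρ).take (i : ℕ)).reverse.prod


namespace HurwitzAux

variable {n m : ℕ}

/-- `ρ 0 * ρ 1 * ⋯ * ρ (i-1)`. -/
def prefP (ρ : Fin m → Perm (Fin n)) (i : ℕ) : Perm (Fin n) :=
  ((List.ofFn ρ).take i).prod

/-- `ρ k * ⋯ * ρ (m-2)`. -/
def segP (ρ : Fin m → Perm (Fin n)) (k : ℕ) : Perm (Fin n) :=
  (((List.ofFn ρ).take (m-1)).drop k).prod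

def cyc (k : ℕ) (ρ : Fin m → Perm (Fin n)) : Fin m → Perm (Fin n) := fun j =>
  if (j : ℕ) < k then ρ j
  else if (j : ℕ) = k then
    segP ρ k * ρ ⟨m-1, by have := j.isLt; omega⟩ * (segP ρ k)⁻¹
  else ρ ⟨(j:ℕ) - 1, by have := j.isLt; omega⟩

def stS (k : ℕ) (ρ : Fin m → Perm (Fin n)) : Fin m → Perm (Fin n) := fun j =>
  if (j : ℕ) < k then
    prefP ρ (m-1-(j:ℕ)) * ρ ⟨m-1-(j:ℕ), by have := j.isLt; omega⟩ *
      (prefP ρ (m-1-(j:ℕ)))⁻¹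
  else ρ ⟨(j:ℕ) - k, by have := j.isLt; omega⟩

lemma segP_cons (ρ : Fin m → Perm (Fin n)) (k : ℕ) (hk : k < m - 1) :
    segP ρ k = ρ ⟨k, by omega⟩ * segP ρ (k+1) := by
  unfold segP
  rw [List.drop_eq_getElem_cons (by simp; omega), List.prod_cons]
  congr 1
  simp

lemma segP_last (ρ : Fin m → Perm (Fin n)) : segP ρ (m-1) = 1 := by
  unfold segP
  rw [List.drop_eq_nil_of_le (by simp)]
  rfl

lemma prefP_succ (ρ : Fin m → Perm (Fin n)) (i : ℕ) (hi : i < m) :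
    prefP ρ (i+1) = prefP ρ i * ρ ⟨i, hi⟩ := by
  unfold prefP
  rw [List.take_succ, List.prod_append]
  congr 1
  rw [List.getElem?_eq_getElem (by simp; omega)]
  simp

lemma braidDelta_step (m k : ℕ) (hk : k + 2 ≤ m) :
    braidDelta m (k+1) m = braidDelta m (k+2) m * braidGen' m k := by
  unfold braidDelta
  rw [show m - (k+1) = (m - (k+2)) + 1 from by omega, List.range_succ,
    List.map_append, List.prod_append]
  simp only [List.map_cons, List.map_nil, List.prod_cons, List.prod_nil, mul_one]
  congr 2
  omega

end HurwitzAux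

namespace HurwitzAux

lemma act_delta {n m : ℕ}
    (act : (Fin m → Perm (Fin n)) → BraidGroup m → (Fin m → Perm (Fin n)))
    (hone : ∀ ρ, act ρ 1 = ρ)
    (hmul : ∀ ρ β γ, act ρ (β * γ) = act (act ρ β) γ)
    (hgen : ∀ ρ (i : Fin (m-1)), act ρ (braidGen i) = hurwitzMove i ρ) :
    ∀ d, d ≤ m - 1 → ∀ ρ, act ρ (braidDelta m (m - d) m) = cyc (m - 1 - d) ρ := by
  intro d
  induction d with
  | zero =>
    intro _ ρ
    have h0 : braidDelta m m m = 1 := by unfold braidDelta; simp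
    rw [show m - 0 = m from rfl, h0, hone]
    funext j
    unfold cyc
    simp only [Nat.sub_zero]
    split_ifs with h1 h2
    · rfl
    · rw [segP_last]
      simp only [one_mul, inv_one, mul_one]
      congr 1
      exact Fin.ext (by show (j:ℕ) = m - 1; omega)
    · exfalso; have := j.isLt; omega
  | succ d ih =>
    intro hd ρ
    have hm2 : m - 2 - d < m - 1 := by omega
    have hstep : braidDelta m (m - (d+1)) m
        = braidDelta m (m - d) m * braidGen' m (m-2-d) := by
      have h := braidDelta_step m (m-2-d) (by omega)
      rw [show m - (d+1) = (m-2-d)+1 from by omega,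
        show m - d = (m-2-d)+2 from by omega]
      exact h
    have hbg : braidGen' m (m-2-d) = braidGen (⟨m-2-d, hm2⟩ : Fin (m-1)) := by
      unfold braidGen' braidGen
      rw [dif_pos hm2]
    rw [hstep, hmul, ih (by omega), hbg, hgen]
    set k := m - 2 - d with hkdef
    rw [show m - 1 - d = k + 1 from by omega, show m - 1 - (d+1) = k from by omega]
    funext j
    have hjm := j.isLt
    simp only [hurwitzMove, cyc]
    split_ifs with h1 h2 h3 h4 h5 h6 h7 h8 <;> try omega
    · -- j = k : main conjugation case
      rw [segP_cons ρ k hm2]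
      have hj : j = (⟨k, by omega⟩ : Fin m) := Fin.ext h1
      rw [hj]
      simp [mul_assoc, mul_inv_rev]
    · -- j = k+1
      congr 1
      exact Fin.ext (by show m - 2 - d = (j:ℕ) - 1; omega)
    · rfl
    · rfl

end HurwitzAux

namespace HurwitzAux

def Gpre (m k : ℕ) : BraidGroup m :=
  ((List.range k).map fun t => braidDelta m (1+t) m).prod

lemma Gpre_succ (m k : ℕ) :
    Gpre m (k+1) = Gpre m k * braidDelta m (k+1) m := by
  unfold Gpre
  rw [List.range_succ, List.map_append, List.prod_append]
  simp [Nat.add_comm]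

lemma garside_eq_Gpre (m : ℕ) : garside m = Gpre m (m-1) := rfl

lemma segP_stS {n m : ℕ} (ρ : Fin m → Perm (Fin n)) (k : ℕ) (hk : k ≤ m - 1) :
    segP (stS k ρ) k = prefP ρ (m-1-k) := by
  unfold segP prefP
  congr 1
  apply List.ext_getElem
  · simp; omega
  · intro i h1 h2
    simp only [List.getElem_drop, List.getElem_take, List.getElem_ofFn]
    simp only [List.length_drop, List.length_take, List.length_ofFn] at h1 h2
    unfold stS
    rw [if_neg (by simp)]
    congr 1
    all_goals exact Fin.ext (by show k + i - k = i; omega)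

lemma act_gar_pre {n m : ℕ}
    (act : (Fin m → Perm (Fin n)) → BraidGroup m → (Fin m → Perm (Fin n)))
    (hone : ∀ ρ, act ρ 1 = ρ)
    (hmul : ∀ ρ β γ, act ρ (β * γ) = act (act ρ β) γ)
    (hgen : ∀ ρ (i : Fin (m-1)), act ρ (braidGen i) = hurwitzMove i ρ)
    (ρ : Fin m → Perm (Fin n)) :
    ∀ k, k ≤ m - 1 → act ρ (Gpre m k) = stS k ρ := by
  intro k
  induction k with
  | zero =>
    intro _
    have h0 : Gpre m 0 = 1 := by unfold Gpre; simp
    rw [h0, hone]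
    funext j
    unfold stS
    rw [if_neg (by omega)]
    exact congrArg ρ (Fin.ext (show (j:ℕ) = (j:ℕ) - 0 by omega)).symm
  | succ k ih =>
    intro hk
    rw [Gpre_succ, hmul, ih (by omega)]
    have hA := act_delta act hone hmul hgen (m-1-k) (by omega) (stS k ρ)
    rw [show m - (m-1-k) = k + 1 from by omega,
      show m - 1 - (m-1-k) = k from by omega] at hA
    rw [hA]
    funext j
    have hjm := j.isLt
    simp only [cyc, stS]
    split_ifs with h1 h2 h3 h4 h5 h6 h7 h8 <;> try omega
    · rfl
    · rw [segP_stS ρ k (by omega)]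
      have he : m - 1 - (j:ℕ) = m - 1 - k := by omega
      simp only [he]
    · exact congrArg ρ (Fin.ext (show (j:ℕ) - 1 - k = (j:ℕ) - (k+1) by omega))

lemma rev_prod_inv {n : ℕ} (l : List (Perm (Fin n))) (h : ∀ x ∈ l, x * x = 1) :
    (l.reverse.prod)⁻¹ = l.prod := by
  induction l with
  | nil => simp
  | cons a l ih =>
    have ha : a⁻¹ = a := inv_eq_of_mul_eq_one_right (h a List.mem_cons_self)
    rw [List.reverse_cons, List.prod_append, List.prod_cons, List.prod_nil,
      mul_one, mul_inv_rev, ih (fun x hx => h x (List.mem_cons_of_mem a hx)),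
      List.prod_cons, ha]

lemma mbDualF_eq {n m : ℕ} (ρ : Fin m → Perm (Fin n)) (hρ : ∀ i, (ρ i).IsSwap)
    (i : Fin m) :
    mbDualF ρ i = prefP ρ (i:ℕ) * ρ i * (prefP ρ (i:ℕ))⁻¹ := by
  have hinv : ∀ x ∈ (List.ofFn ρ).take (i:ℕ), x * x = 1 := by
    intro x hx
    obtain ⟨t, rfl⟩ := List.mem_ofFn.mp (List.mem_of_mem_take hx)
    obtain ⟨a, b, -, hab⟩ := hρ t
    rw [hab]
    exact Equiv.swap_mul_self a b
  have h1 : (((List.ofFn ρ).take (i:ℕ)).reverse.prod)⁻¹ = prefP ρ (i:ℕ) :=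
    rev_prod_inv _ hinv
  have h2 : ((List.ofFn ρ).take (i:ℕ)).reverse.prod = (prefP ρ (i:ℕ))⁻¹ := by
    rw [← h1, inv_inv]
  unfold mbDualF
  rw [h1, h2]

end HurwitzAux

open HurwitzAux

/-- For any right Hurwitz action of `B_m` on sequences of `m` transpositions
of `S_n`, the action of the Garside element `Δ_m` satisfies
`ρ·Δ_m = (τ_m^{τ_{m-1}⋯τ_1}, ..., τ_2^{τ_1}, τ_1)`; equivalently, the mind-body dual `ρ*`
is the reverse of `ρ·Δ_m`. -/
theorem hurwitz_garside_eq_reverse_mbDual {n m : ℕ}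
    (act : (Fin m → Perm (Fin n)) → BraidGroup m → (Fin m → Perm (Fin n)))
    (hone : ∀ ρ, act ρ 1 = ρ)
    (hmul : ∀ ρ β γ, act ρ (β * γ) = act (act ρ β) γ)
    (hgen : ∀ ρ (i : Fin (m - 1)), act ρ (braidGen i) = hurwitzMove i ρ)
    (ρ : Fin m → Perm (Fin n)) (hρ : ∀ i, (ρ i).IsSwap) :
    act ρ (garside m) = (fun i : Fin m => mbDualF ρ i.rev) ∧
    mbDualF ρ = (fun i : Fin m => act ρ (garside m) i.rev) := by
  have hmain : act ρ (garside m) = (fun i : Fin m => mbDualF ρ i.rev) := by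
    rcases Nat.eq_zero_or_pos m with hm | hm
    · subst hm
      have hg : garside 0 = 1 := by unfold garside braidDeltaGar; simp
      rw [hg, hone]
      funext j
      exact j.elim0
    · rw [garside_eq_Gpre, act_gar_pre act hone hmul hgen ρ (m-1) le_rfl]
      funext j
      have hjm := j.isLt
      have hrev : (j.rev : ℕ) = m - 1 - (j : ℕ) := by rw [Fin.val_rev]; omega
      have hrev' : j.rev = (⟨m - 1 - (j : ℕ), by omega⟩ : Fin m) := Fin.ext hrev
      simp only [mbDualF_eq ρ hρ, hrev']
      unfold stS
      split_ifs with h1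
      · rfl
      · have e1 : m - 1 - (j : ℕ) = 0 := by omega
        have e2 : (j : ℕ) - (m - 1) = 0 := by omega
        simp only [e1, e2]
        have : prefP ρ 0 = 1 := by unfold prefP; simp
        rw [this]
        simp
  refine ⟨hmain, ?_⟩
  funext i
  rw [hmain]
  simp [Fin.rev_rev]
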